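/- Let S be a left-sided convex point set of n points in general position and let P = d_1,...,d_{n-1} be a path whose labels all lie in {U,D,R}. Then P admits a planar direction-consistent embedding E on S; moreover E can be chosen so that E(v_n) equals t(S) if d_{n-1}=U, equals b(S) if d_{n-1}=D, and equals either t(S) or b(S) (namely the rightmost point of S) if d_{n-1}=R. -/

import Mathlib

/-- Edge direction labels. -/
inductive Dir | U | D | L | R
deriving DecidableEq

/-- Opposite label: U↔D, L↔R. -/
def Dir.opp : Dir → Dir
  | .U => .D | .D => .U | .L => .R | .R => .L

/-- Label after counterclockwise rotation by π/2: U↦L, D↦R, R↦U, L↦D. -/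
def Dir.rot : Dir → Dir
  | .U => .L | .D => .R | .R => .U | .L => .D

/-- Label after vertical-line reflection: U↦U, D↦D, R↦L, L↦R. -/
def Dir.mir : Dir → Dir
  | .U => .U | .D => .D | .R => .L | .L => .R

/-- An edge from `a` to `b` is consistent with a direction label. -/
def dirOk : Dir → ℝ × ℝ → ℝ × ℝ → Prop
  | .U, a, b => a.2 < b.2
  | .D, a, b => b.2 < a.2
  | .R, a, b => a.1 < b.1
  | .L, a, b => b.1 < a.1

/-- The drawing of a path with edge labels `d` and vertex placement `E` is
direction-consistent. -/
def DirConsistent {m : ℕ} (d : Fin m → Dir) (E : Fin (m + 1) → ℝ × ℝ) : Prop :=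
  ∀ i : Fin m, dirOk (d i) (E i.castSucc) (E i.succ)

/-- The straight-line drawing of the path with vertex placement `E` is planar:
non-adjacent segments are disjoint; adjacent segments meet only at the shared endpoint. -/
def PlanarDrawing {m : ℕ} (E : Fin (m + 1) → ℝ × ℝ) : Prop :=
  (∀ i j : Fin m, (i : ℕ) + 1 < (j : ℕ) →
    segment ℝ (E i.castSucc) (E i.succ) ∩ segment ℝ (E j.castSucc) (E j.succ) = ∅) ∧
  (∀ i j : Fin m, (i : ℕ) + 1 = (j : ℕ) →
    segment ℝ (E i.castSucc) (E i.succ) ∩ segment ℝ (E j.castSucc) (E j.succ) = {E i.succ})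

/-- `E` is an embedding of the path vertices onto the point set `S`. -/
def EmbOn {m : ℕ} (E : Fin (m + 1) → ℝ × ℝ) (S : Set (ℝ × ℝ)) : Prop :=
  Function.Injective E ∧ Set.range E = S

/-- Planar direction-consistent embedding of the labeled path `d` on `S`. -/
def PDCE {m : ℕ} (d : Fin m → Dir) (E : Fin (m + 1) → ℝ × ℝ) (S : Set (ℝ × ℝ)) : Prop :=
  EmbOn E S ∧ DirConsistent d E ∧ PlanarDrawing E

/-- `S` is in convex position. -/
def ConvexPos (S : Set (ℝ × ℝ)) : Prop :=
  ConvexIndependent ℝ ((↑) : S → ℝ × ℝ)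

/-- No three distinct points of `S` are collinear. -/
def NoThreeCollinear (S : Set (ℝ × ℝ)) : Prop :=
  ∀ p ∈ S, ∀ q ∈ S, ∀ r ∈ S, p ≠ q → p ≠ r → q ≠ r →
    ¬ Collinear ℝ ({p, q, r} : Set (ℝ × ℝ))

/-- General position: no three collinear, no two points with equal x- or y-coordinate. -/
def GenPos (S : Set (ℝ × ℝ)) : Prop :=
  NoThreeCollinear S ∧ ∀ p ∈ S, ∀ q ∈ S, p ≠ q → p.1 ≠ q.1 ∧ p.2 ≠ q.2

def IsTopmost (S : Set (ℝ × ℝ)) (t : ℝ × ℝ) : Prop :=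
  t ∈ S ∧ ∀ p ∈ S, p ≠ t → p.2 < t.2
def IsBottommost (S : Set (ℝ × ℝ)) (b : ℝ × ℝ) : Prop :=
  b ∈ S ∧ ∀ p ∈ S, p ≠ b → b.2 < p.2
def IsLeftmost (S : Set (ℝ × ℝ)) (l : ℝ × ℝ) : Prop :=
  l ∈ S ∧ ∀ p ∈ S, p ≠ l → l.1 < p.1
def IsRightmost (S : Set (ℝ × ℝ)) (r : ℝ × ℝ) : Prop :=
  r ∈ S ∧ ∀ p ∈ S, p ≠ r → p.1 < r.1

/-- Cross product telling on which side of the directed line `a → b` the point `p` lies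
(`0 < cross a b p` means `p` is strictly to the left). -/
def cross (a b p : ℝ × ℝ) : ℝ :=
  (b.1 - a.1) * (p.2 - a.2) - (b.2 - a.2) * (p.1 - a.1)

/-- With `b` bottommost and `t` topmost, all other points lie strictly to the left of the
line through `b` and `t`. -/
def LeftSided (S : Set (ℝ × ℝ)) (b t : ℝ × ℝ) : Prop :=
  IsBottommost S b ∧ IsTopmost S t ∧ ∀ p ∈ S, p ≠ b → p ≠ t → 0 < cross b t p

/-- With `b` bottommost and `t` topmost, all other points lie strictly to the right of the
line through `b` and `t`. -/
def RightSided (S : Set (ℝ × ℝ)) (b t : ℝ × ℝ) : Prop :=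
  IsBottommost S b ∧ IsTopmost S t ∧ ∀ p ∈ S, p ≠ b → p ≠ t → cross b t p < 0

/-- Two points of `S` are consecutive on the convex hull of `S`: all other points of `S`
lie strictly on one side of the line through them. -/
def HullConsecutive (S : Set (ℝ × ℝ)) (p q : ℝ × ℝ) : Prop :=
  p ∈ S ∧ q ∈ S ∧ p ≠ q ∧
    ((∀ r ∈ S, r ≠ p → r ≠ q → 0 < cross p q r) ∨
     (∀ r ∈ S, r ≠ p → r ≠ q → cross p q r < 0))

/-- Strip-convex point set with bottommost `b`, leftmost `l`, topmost `t`, rightmost `r`: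
`b` and `l` coincide or are hull-consecutive, and so do `t` and `r`. -/
def StripConvex (S : Set (ℝ × ℝ)) (b l t r : ℝ × ℝ) : Prop :=
  IsBottommost S b ∧ IsLeftmost S l ∧ IsTopmost S t ∧ IsRightmost S r ∧
    (b = l ∨ HullConsecutive S b l) ∧ (t = r ∨ HullConsecutive S t r)

/-- `T` is a consecutive subset of the convex point set `S` along its hull:
it can be separated from `S \ T` by a line. -/
def Consecutive (S T : Set (ℝ × ℝ)) : Prop :=
  T ⊆ S ∧ ∃ f : (ℝ × ℝ) →ₗ[ℝ] ℝ, ∃ c : ℝ,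
    (∀ p ∈ T, c < f p) ∧ ∀ p ∈ S \ T, f p < c

section AuxPDCE


lemma cross_comb (a b x y : ℝ × ℝ) (u v : ℝ) (huv : u + v = 1) :
    cross a b (u • x + v • y) = u * cross a b x + v * cross a b y := by
  have hv : v = 1 - u := by linarith
  subst hv
  simp only [cross, Prod.smul_fst, Prod.smul_snd, Prod.fst_add, Prod.snd_add, smul_eq_mul]
  ring

lemma cross_self_left (a b : ℝ × ℝ) : cross a b a = 0 := by simp [cross]
lemma cross_self_right (a b : ℝ × ℝ) : cross a b b = 0 := by simp [cross]; ring

lemma comb_lt {u v a2 b2 c : ℝ} (hu : 0 ≤ u) (hv : 0 ≤ v) (huv : u + v = 1)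
    (h1 : a2 < c) (h2 : b2 < c) : u * a2 + v * b2 < c := by
  rcases eq_or_lt_of_le hu with h | h
  · have hv1 : v = 1 := by linarith
    rw [← h, hv1]; linarith
  · have ha : u * a2 < u * c := mul_lt_mul_of_pos_left h1 h
    have hb : v * b2 ≤ v * c := mul_le_mul_of_nonneg_left h2.le hv
    have hc : u * c + v * c = c := by linear_combination c * huv
    linarith

lemma segDisjCross (o1 o2 a b : ℝ × ℝ) (ha : 0 < cross o1 o2 a) (hb : 0 < cross o1 o2 b) :
    segment ℝ a b ∩ segment ℝ o1 o2 = ∅ := by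
  ext x
  simp only [Set.mem_inter_iff, Set.mem_empty_iff_false, iff_false, not_and]
  rintro ⟨u, v, hu, hv, huv, hx⟩ ⟨u', v', hu', hv', huv', hx'⟩
  have h1 : 0 < cross o1 o2 x := by
    rw [← hx, cross_comb _ _ _ _ _ _ huv]
    have := comb_lt hu hv huv (neg_neg_iff_pos.2 ha) (neg_neg_iff_pos.2 hb)
    nlinarith
  have h2 : cross o1 o2 x = 0 := by
    rw [← hx', cross_comb _ _ _ _ _ _ huv', cross_self_left, cross_self_right]; ring
  linarith

lemma segDisjY (c : ℝ) (a b a' b' : ℝ × ℝ) (h1 : a.2 < c) (h2 : b.2 < c) (h3 : c < a'.2)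
    (h4 : c < b'.2) : segment ℝ a b ∩ segment ℝ a' b' = ∅ := by
  ext x
  simp only [Set.mem_inter_iff, Set.mem_empty_iff_false, iff_false, not_and]
  rintro ⟨u, v, hu, hv, huv, hx⟩ ⟨u', v', hu', hv', huv', hx'⟩
  have e1 : x.2 = u * a.2 + v * b.2 := by rw [← hx]; simp
  have e2 : x.2 = u' * a'.2 + v' * b'.2 := by rw [← hx']; simp
  have := comb_lt hu hv huv h1 h2
  have h3' : -a'.2 < -c := by linarith
  have h4' : -b'.2 < -c := by linarith
  have := comb_lt hu' hv' huv' h3' h4'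
  nlinarith

lemma segAdj (q r s : ℝ × ℝ) (h : ¬ Collinear ℝ ({q, r, s} : Set (ℝ × ℝ))) :
    segment ℝ q r ∩ segment ℝ r s = {r} := by
  apply Set.eq_singleton_iff_unique_mem.2
  refine ⟨⟨right_mem_segment ℝ q r, left_mem_segment ℝ r s⟩, ?_⟩
  rintro x ⟨⟨u, v, hu, hv, huv, hx⟩, ⟨u', v', hu', hv', huv', hx'⟩⟩
  by_cases hu0 : u = 0
  · rw [hu0] at hx huv; simp at huv; rw [huv] at hx; simpa using hx.symm
  by_cases hv0 : v' = 0
  · rw [hv0] at hx' huv'; simp at huv'; rw [huv'] at hx'; simpa using hx'.symm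
  exfalso
  apply h
  rw [collinear_iff_of_mem (show r ∈ ({q, r, s} : Set (ℝ × ℝ)) by simp)]
  refine ⟨x - r, ?_⟩
  rintro p (rfl | rfl | rfl)
  · refine ⟨1/u, ?_⟩
    have hv1 : v = 1 - u := by linarith
    subst hv1
    rw [vadd_eq_add, ← hx]
    match_scalars <;> field_simp <;> ring
  · exact ⟨0, by simp⟩
  · refine ⟨1/v', ?_⟩
    have hu1 : u' = 1 - v' := by linarith
    subst hu1
    rw [vadd_eq_add, ← hx']
    match_scalars <;> field_simp <;> ring


lemma exists_sorted {n : ℕ} (S : Set (ℝ × ℝ)) (hfin : S.Finite) (hcard : S.ncard = n)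
    (hy : ∀ p ∈ S, ∀ q ∈ S, p ≠ q → p.2 ≠ q.2) :
    ∃ p : Fin n → ℝ × ℝ, (∀ i, p i ∈ S) ∧ StrictMono (fun i => (p i).2) ∧
      ∀ q ∈ S, ∃ i, p i = q := by
  have hfs : hfin.toFinset.card = n := by
    rw [Set.ncard_eq_toFinset_card _ hfin] at hcard; exact hcard
  set e := Finset.equivFinOfCardEq hfs with he
  set f : Fin n → ℝ := fun i => ((e.symm i : ℝ × ℝ)).2 with hf
  have hfinj : Function.Injective f := by
    intro i j hij
    by_contra hne
    have h1 : (e.symm i : ℝ × ℝ) ∈ S := (Set.Finite.mem_toFinset hfin).1 (e.symm i).2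
    have h2 : (e.symm j : ℝ × ℝ) ∈ S := (Set.Finite.mem_toFinset hfin).1 (e.symm j).2
    have hne' : (e.symm i : ℝ × ℝ) ≠ (e.symm j : ℝ × ℝ) := by
      intro hc
      exact hne (e.symm.injective (Subtype.ext hc))
    exact hy _ h1 _ h2 hne' hij
  set σ := Tuple.sort f with hσ
  refine ⟨fun i => (e.symm (σ i) : ℝ × ℝ), ?_, ?_, ?_⟩
  · exact fun i => (Set.Finite.mem_toFinset hfin).1 (e.symm (σ i)).2
  · have hmono : Monotone (f ∘ σ) := Tuple.monotone_sort f
    have hinj : Function.Injective (f ∘ σ) := hfinj.comp σ.injective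
    exact hmono.strictMono_of_injective hinj
  · intro q hq
    refine ⟨σ.symm (e ⟨q, (Set.Finite.mem_toFinset hfin).2 hq⟩), ?_⟩
    simp




lemma collinear_of_cross_eq_zero {a b c : ℝ × ℝ} (hab : a ≠ b) (h : cross a b c = 0) :
    Collinear ℝ ({a, b, c} : Set (ℝ × ℝ)) := by
  rw [collinear_iff_of_mem (show a ∈ ({a, b, c} : Set (ℝ × ℝ)) by simp)]
  refine ⟨b - a, ?_⟩
  rintro p (rfl | rfl | rfl)
  · exact ⟨0, by simp⟩
  · exact ⟨1, by simp⟩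
  · by_cases h1 : b.1 = a.1
    · have h2 : b.2 ≠ a.2 := by
        intro hc; exact hab (Prod.ext h1 hc).symm
      refine ⟨(p.2 - a.2) / (b.2 - a.2), ?_⟩
      have hp1 : p.1 = a.1 := by
        have : (b.2 - a.2) * (p.1 - a.1) = 0 := by
          simp only [cross] at h; rw [h1] at h; linarith
        rcases mul_eq_zero.1 this with hc | hc
        · exact absurd (by linarith) h2
        · linarith
      rw [vadd_eq_add]
      apply Prod.ext
      · simp [Prod.smul_fst, h1, hp1]
      · simp only [Prod.snd_add, Prod.smul_snd, Prod.snd_sub, smul_eq_mul]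
        field_simp [sub_ne_zero.mpr h2]
        ring
    · refine ⟨(p.1 - a.1) / (b.1 - a.1), ?_⟩
      have hb1 : b.1 - a.1 ≠ 0 := fun hc => h1 (by linarith)
      have hp2 : (b.1 - a.1) * (p.2 - a.2) = (b.2 - a.2) * (p.1 - a.1) := by
        simp only [cross] at h; linarith
      rw [vadd_eq_add]
      apply Prod.ext
      · simp only [Prod.fst_add, Prod.smul_fst, Prod.fst_sub, smul_eq_mul]
        field_simp
        ring
      · simp only [Prod.snd_add, Prod.smul_snd, Prod.snd_sub, smul_eq_mul]
        field_simp
        nlinarith [hp2]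

lemma lemA {n : ℕ} {p : Fin (n + 1) → ℝ × ℝ} {S : Set (ℝ × ℝ)}
    (hmem : ∀ i, p i ∈ S)
    (hy : StrictMono fun i => (p i).2)
    (hconv : ConvexPos S)
    (hnc : ∀ x ∈ S, ∀ y ∈ S, ∀ z ∈ S, x ≠ y → x ≠ z → y ≠ z →
      ¬ Collinear ℝ ({x, y, z} : Set (ℝ × ℝ)))
    (hls : ∀ j : Fin (n + 1), j ≠ 0 → j ≠ Fin.last n →
      0 < cross (p 0) (p (Fin.last n)) (p j)) :
    ∀ i j k : Fin (n + 1), i < j → j < k → 0 < cross (p i) (p k) (p j) := by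
  have hpinj : Function.Injective p := by
    intro i j hij
    by_contra hne
    rcases lt_or_gt_of_ne hne with h | h
    · exact absurd (congrArg Prod.snd hij) (ne_of_lt (hy h))
    · exact absurd (congrArg Prod.snd hij).symm (ne_of_lt (hy h))
  intro i j k hij hjk
  by_contra hle
  push_neg at hle
  -- strict negativity from no-three-collinear
  have hik : i ≠ k := ne_of_lt (hij.trans hjk)
  have hne_ik : p i ≠ p k := fun hc => hik (hpinj hc)
  have hne_ij : p i ≠ p j := fun hc => (ne_of_lt hij) (hpinj hc)
  have hne_jk : p j ≠ p k := fun hc => (ne_of_lt hjk) (hpinj hc)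
  have hcr : cross (p i) (p k) (p j) < 0 := by
    rcases lt_or_eq_of_le hle with h | h
    · exact h
    · exact absurd (collinear_of_cross_eq_zero hne_ik h)
        (hnc (p i) (hmem i) (p k) (hmem k) (p j) (hmem j) hne_ik hne_ij hne_jk.symm)
  have hj0 : j ≠ 0 := by
    intro hc; subst hc; exact absurd hij (by simp [Fin.not_lt, Fin.zero_le])
  have hjl : j ≠ Fin.last n := by
    intro hc; subst hc
    exact absurd hjk (by simp [Fin.not_lt, Fin.le_last])
  have h0 := hls j hj0 hjl
  -- coordinates
  set a := p i with ha
  set c := p k with hc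
  set q := p j with hq
  set b0 := p 0 with hb0
  set t0 := p (Fin.last n) with ht0
  have hyaq : a.2 < q.2 := hy hij
  have hyqc : q.2 < c.2 := hy hjk
  have hyb0 : b0.2 ≤ a.2 := by
    rcases Nat.eq_zero_or_pos (i : ℕ) with h | h
    · have hi0 : i = 0 := by ext; simp [h]
      subst hi0; exact le_of_eq rfl
    · exact le_of_lt (hy (Fin.lt_def.2 (by simpa using h)))
  have hyt0 : c.2 ≤ t0.2 := by
    rcases eq_or_lt_of_le (Fin.le_last k) with h | h
    · subst h; exact le_of_eq rfl
    · exact le_of_lt (hy h)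
  -- the point L on segment a c at height q.2
  set u : ℝ := (q.2 - a.2) / (c.2 - a.2) with hu
  have hcane : (0:ℝ) < c.2 - a.2 := by linarith
  have hu0 : 0 < u := div_pos (by linarith) hcane
  have hu1 : u < 1 := (div_lt_one hcane).2 (by linarith)
  set L : ℝ × ℝ := (1 - u) • a + u • c with hL
  have hL2 : L.2 = q.2 := by
    simp only [hL, Prod.snd_add, Prod.smul_snd, smul_eq_mul, hu]
    field_simp
    ring
  have hL1 : L.1 < q.1 := by
    have h1 : L.1 = a.1 + u * (c.1 - a.1) := by
      simp only [hL, Prod.fst_add, Prod.smul_fst, smul_eq_mul]; ring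
    rw [h1, hu]
    rw [div_mul_eq_mul_div, ← lt_sub_iff_add_lt', div_lt_iff₀ hcane]
    simp only [cross] at hcr
    nlinarith
  -- the point R on segment b0 t0 at height q.2
  set v : ℝ := (q.2 - b0.2) / (t0.2 - b0.2) with hv
  have htbne : (0:ℝ) < t0.2 - b0.2 := by linarith
  have hv0 : 0 < v := div_pos (by linarith) htbne
  have hv1 : v < 1 := (div_lt_one htbne).2 (by linarith)
  set R : ℝ × ℝ := (1 - v) • b0 + v • t0 with hR
  have hR2 : R.2 = q.2 := by
    simp only [hR, Prod.snd_add, Prod.smul_snd, smul_eq_mul, hv]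
    field_simp
    ring
  have hR1 : q.1 < R.1 := by
    have h1 : R.1 = b0.1 + v * (t0.1 - b0.1) := by
      simp only [hR, Prod.fst_add, Prod.smul_fst, smul_eq_mul]; ring
    rw [h1, hv]
    rw [div_mul_eq_mul_div, ← sub_lt_iff_lt_add', lt_div_iff₀ htbne]
    simp only [cross] at h0
    nlinarith
  -- q is a convex combination of L and R
  set w : ℝ := (q.1 - L.1) / (R.1 - L.1) with hw
  have hRL : (0:ℝ) < R.1 - L.1 := by linarith
  have hw0 : 0 < w := div_pos (by linarith) hRL
  have hw1 : w < 1 := (div_lt_one hRL).2 (by linarith)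
  have hqLR : q = (1 - w) • L + w • R := by
    apply Prod.ext
    · simp only [Prod.fst_add, Prod.smul_fst, smul_eq_mul, hw]
      field_simp
      ring
    · simp only [Prod.snd_add, Prod.smul_snd, smul_eq_mul, hL2, hR2]
      ring
  -- memberships in the hull of S \ {q}
  have hqS : q ∈ S := hmem j
  have hmem' : ∀ l : Fin (n+1), l ≠ j → p l ∈ S \ {q} := by
    intro l hl
    exact ⟨hmem l, fun hc => hl (hpinj (by simpa [hq] using hc))⟩
  have hhull := convex_convexHull ℝ (S \ {q})
  have hLin : L ∈ convexHull ℝ (S \ {q}) := by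
    have hseg : L ∈ segment ℝ a c := ⟨1 - u, u, by linarith, hu0.le, by ring, rfl⟩
    exact hhull.segment_subset
      (subset_convexHull ℝ _ (hmem' i (ne_of_lt hij)))
      (subset_convexHull ℝ _ (hmem' k (ne_of_gt hjk))) hseg
  have hRin : R ∈ convexHull ℝ (S \ {q}) := by
    have hseg : R ∈ segment ℝ b0 t0 := ⟨1 - v, v, by linarith, hv0.le, by ring, rfl⟩
    exact hhull.segment_subset
      (subset_convexHull ℝ _ (hmem' 0 (Ne.symm hj0)))
      (subset_convexHull ℝ _ (hmem' (Fin.last n) (Ne.symm hjl))) hseg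
  have hqin : q ∈ convexHull ℝ (S \ {q}) := by
    have hseg : q ∈ segment ℝ L R := ⟨1 - w, w, by linarith, hw0.le, by ring, hqLR.symm⟩
    exact hhull.segment_subset hLin hRin hseg
  exact (convexIndependent_set_iff_notMem_convexHull_sdiff.1 hconv q hqS) hqin

lemma lemX {n : ℕ} {p : Fin (n + 1) → ℝ × ℝ}
    (hy : StrictMono fun i => (p i).2)
    (hcross : ∀ i j k : Fin (n + 1), i < j → j < k → 0 < cross (p i) (p k) (p j)) :
    ∀ i j k : Fin (n + 1), i < j → j < k → (p j).1 < max (p i).1 (p k).1 := by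
  intro i j k hij hjk
  have hcr := hcross i j k hij hjk
  have h1 : (p i).2 < (p j).2 := hy hij
  have h2 : (p j).2 < (p k).2 := hy hjk
  by_contra hle
  push_neg at hle
  rw [max_le_iff] at hle
  simp only [cross] at hcr
  rcases le_or_gt (p i).1 (p k).1 with h | h
  · nlinarith [hle.1, hle.2]
  · nlinarith [hle.1, hle.2]



noncomputable def stepB (xs : ℕ → ℝ) (dir : Dir) (lo hi : ℕ) : Bool :=
  match dir with
  | .U => true
  | .D => false
  | .R => decide (xs lo < xs hi)
  | .L => true

noncomputable def ivl (xs : ℕ → ℝ) (dd : ℕ → Dir) (m : ℕ) : ℕ → ℕ × ℕ :=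
  fun r => Nat.rec (0, m)
    (fun r q => if stepB xs (dd (m - r - 1)) q.1 q.2 then (q.1, q.2 - 1) else (q.1 + 1, q.2)) r

lemma ivl_zero (xs : ℕ → ℝ) (dd : ℕ → Dir) (m : ℕ) : ivl xs dd m 0 = (0, m) := rfl

lemma ivl_succ (xs : ℕ → ℝ) (dd : ℕ → Dir) (m r : ℕ) :
    ivl xs dd m (r + 1) = (if stepB xs (dd (m - r - 1)) (ivl xs dd m r).1 (ivl xs dd m r).2
      then ((ivl xs dd m r).1, (ivl xs dd m r).2 - 1)
      else ((ivl xs dd m r).1 + 1, (ivl xs dd m r).2)) := rfl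

noncomputable def sg (xs : ℕ → ℝ) (dd : ℕ → Dir) (m k : ℕ) : ℕ :=
  if k = 0 then (ivl xs dd m m).1
  else
    let q := ivl xs dd m (m - k)
    if stepB xs (dd (k - 1)) q.1 q.2 then q.2 else q.1

variable (xs : ℕ → ℝ) (dd : ℕ → Dir) (m : ℕ)

lemma ivl_spec : ∀ r, r ≤ m → (ivl xs dd m r).1 + (m - r) = (ivl xs dd m r).2 := by
  intro r
  induction r with
  | zero => intro _; simp [ivl_zero]
  | succ r ih =>
    intro hr
    have h := ih (by omega)
    rw [ivl_succ]
    cases hb : stepB xs (dd (m - r - 1)) (ivl xs dd m r).1 (ivl xs dd m r).2 <;>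
      simp [hb] <;> omega

lemma ivl_mono : ∀ r r', r ≤ r' →
    (ivl xs dd m r).1 ≤ (ivl xs dd m r').1 ∧ (ivl xs dd m r').2 ≤ (ivl xs dd m r).2 := by
  intro r r' hrr
  induction r' with
  | zero => simp_all
  | succ r' ih =>
    rcases Nat.lt_or_ge r (r'+1) with h | h
    · have := ih (by omega)
      rw [ivl_succ]
      cases hb : stepB xs (dd (m - r' - 1)) (ivl xs dd m r').1 (ivl xs dd m r').2 <;>
        simp [hb] <;> omega
    · have : r = r' + 1 := by omega
      subst this; omega

lemma ivl_hi_le (r : ℕ) : (ivl xs dd m r).2 ≤ m := by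
  have := ivl_mono xs dd m 0 r (Nat.zero_le _)
  simpa [ivl_zero] using this.2

lemma sg_eq (k : ℕ) (hk1 : 1 ≤ k) :
    sg xs dd m k = (if stepB xs (dd (k-1)) (ivl xs dd m (m-k)).1 (ivl xs dd m (m-k)).2
      then (ivl xs dd m (m-k)).2 else (ivl xs dd m (m-k)).1) := by
  have : k ≠ 0 := by omega
  simp [sg, this]

lemma ivl_succ_eq (k : ℕ) (hk1 : 1 ≤ k) (hk2 : k ≤ m) :
    ivl xs dd m (m-k+1) = (if stepB xs (dd (k-1)) (ivl xs dd m (m-k)).1 (ivl xs dd m (m-k)).2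
      then ((ivl xs dd m (m-k)).1, (ivl xs dd m (m-k)).2 - 1)
      else ((ivl xs dd m (m-k)).1 + 1, (ivl xs dd m (m-k)).2)) := by
  have h2 : m - k + 1 = (m - k) + 1 := rfl
  rw [h2, ivl_succ]
  have h1 : m - (m - k) - 1 = k - 1 := by omega
  rw [h1]

lemma sg_mem (k : ℕ) (hk2 : k ≤ m) :
    (ivl xs dd m (m-k)).1 ≤ sg xs dd m k ∧ sg xs dd m k ≤ (ivl xs dd m (m-k)).2 := by
  have hs := ivl_spec xs dd m (m-k) (by omega)
  rcases Nat.eq_zero_or_pos k with rfl | hk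
  · have : sg xs dd m 0 = (ivl xs dd m m).1 := by simp [sg]
    rw [this]
    simp only [Nat.sub_zero] at hs ⊢
    omega
  · rw [sg_eq xs dd m k hk]
    cases hb : stepB xs (dd (k-1)) (ivl xs dd m (m-k)).1 (ivl xs dd m (m-k)).2 <;>
      simp [hb] <;> omega

lemma sg_notmem (k : ℕ) (hk1 : 1 ≤ k) (hk2 : k ≤ m) :
    sg xs dd m k < (ivl xs dd m (m-k+1)).1 ∨ (ivl xs dd m (m-k+1)).2 < sg xs dd m k := by
  have hs := ivl_spec xs dd m (m-k) (by omega)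
  rw [sg_eq xs dd m k hk1, ivl_succ_eq xs dd m k hk1 hk2]
  cases hb : stepB xs (dd (k-1)) (ivl xs dd m (m-k)).1 (ivl xs dd m (m-k)).2 <;>
    simp [hb] <;> omega

lemma sg_le (k : ℕ) (hk2 : k ≤ m) : sg xs dd m k ≤ m :=
  le_trans (sg_mem xs dd m k hk2).2 (ivl_hi_le xs dd m _)

lemma sg_inj (k k' : ℕ) (hk' : k' < k) (hk : k ≤ m) : sg xs dd m k' ≠ sg xs dd m k := by
  have h1 := sg_mem xs dd m k' (by omega)
  have h2 := sg_notmem xs dd m k (by omega) hk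
  have h3 := ivl_mono xs dd m (m-k+1) (m-k') (by omega)
  omega

end AuxPDCE

/-- any {U,D,R}-path has a PDCE on a left-sided convex point set, with the
last vertex on t(S), b(S), or on the rightmost point (which is t(S) or b(S)),
according to the last label. -/
theorem leftSided_UDR_pdce {m : ℕ} (hm : 0 < m) (d : Fin m → Dir)
    (hd : ∀ i, d i ≠ Dir.L) (S : Set (ℝ × ℝ)) (hfin : S.Finite)
    (hcard : S.ncard = m + 1) (hconv : ConvexPos S) (hgen : GenPos S)
    (b t : ℝ × ℝ) (hside : LeftSided S b t) :
    ∃ E : Fin (m + 1) → ℝ × ℝ, PDCE d E S ∧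
      (d ⟨m - 1, Nat.sub_lt hm one_pos⟩ = Dir.U → E (Fin.last m) = t) ∧
      (d ⟨m - 1, Nat.sub_lt hm one_pos⟩ = Dir.D → E (Fin.last m) = b) ∧
      (d ⟨m - 1, Nat.sub_lt hm one_pos⟩ = Dir.R →
        IsRightmost S (E (Fin.last m)) ∧ (E (Fin.last m) = t ∨ E (Fin.last m) = b)) := by
  classical
  obtain ⟨hside_b, hside_t, hside_cross⟩ := hside
  obtain ⟨p, hpmem, hpy, hpsur⟩ := exists_sorted S hfin hcard
    (fun a ha b' hb' hab => (hgen.2 a ha b' hb' hab).2)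
  have hpinj : Function.Injective p := by
    intro i j hij
    by_contra hne
    rcases lt_or_gt_of_ne hne with h | h
    · exact absurd (congrArg Prod.snd hij) (ne_of_lt (hpy h))
    · exact absurd (congrArg Prod.snd hij).symm (ne_of_lt (hpy h))
  have hb : p 0 = b := by
    obtain ⟨i0, hi0⟩ := hpsur b hside_b.1
    rcases eq_or_ne i0 0 with rfl | h0
    · exact hi0
    · exfalso
      have h1 : (p 0).2 < (p i0).2 := hpy (Fin.pos_of_ne_zero h0)
      have h2 : b.2 < (p 0).2 :=
        hside_b.2 (p 0) (hpmem 0) (fun hc => h0 (hpinj (hi0.trans hc.symm)))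
      rw [hi0] at h1
      linarith
  have ht : p (Fin.last m) = t := by
    obtain ⟨i0, hi0⟩ := hpsur t hside_t.1
    rcases eq_or_ne i0 (Fin.last m) with rfl | h0
    · exact hi0
    · exfalso
      have h1 : (p i0).2 < (p (Fin.last m)).2 :=
        hpy (lt_of_le_of_ne (Fin.le_last i0) h0)
      have h2 : (p (Fin.last m)).2 < t.2 :=
        hside_t.2 (p (Fin.last m)) (hpmem _) (fun hc => h0 (hpinj (hi0.trans hc.symm)))
      rw [hi0] at h1
      linarith
  have hls : ∀ j : Fin (m + 1), j ≠ 0 → j ≠ Fin.last m →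
      0 < cross (p 0) (p (Fin.last m)) (p j) := by
    intro j hj0 hjl
    rw [hb, ht]
    exact hside_cross (p j) (hpmem j)
      (fun hc => hj0 (hpinj (hc.trans hb.symm)))
      (fun hc => hjl (hpinj (hc.trans ht.symm)))
  have hcross := lemA hpmem hpy hconv hgen.1 hls
  have hxmax := lemX hpy hcross
  set xs : ℕ → ℝ := fun j => if h : j < m + 1 then (p ⟨j, h⟩).1 else 0 with hxs
  set dd : ℕ → Dir := fun j => if h : j < m then d ⟨j, h⟩ else Dir.U with hdd
  set P : ℕ → ℝ × ℝ := fun a => if h : a < m + 1 then p ⟨a, h⟩ else p 0 with hPs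
  have hPdef : ∀ (a : ℕ) (_ : a ≤ m), P a = p ⟨a, by omega⟩ := by
    intro a h
    simp only [hPs]
    rw [dif_pos (by omega : a < m + 1)]
  have hdd_eq : ∀ (j : ℕ) (h : j < m), dd j = d ⟨j, h⟩ := by
    intro j h; simp only [hdd]; rw [dif_pos h]
  have hxsP : ∀ (a : ℕ) (_ : a ≤ m), xs a = (P a).1 := by
    intro a h
    rw [hPdef a h]
    simp only [hxs]
    rw [dif_pos (by omega : a < m + 1)]
  have hyP : ∀ a c : ℕ, a < c → c ≤ m → (P a).2 < (P c).2 := by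
    intro a c h hc
    rw [hPdef a (by omega), hPdef c hc]
    exact hpy (Fin.mk_lt_mk.2 h)
  have hcrossP : ∀ a b' c : ℕ, a < b' → b' < c → c ≤ m →
      0 < cross (P a) (P c) (P b') := by
    intro a b' c h1 h2 hc
    rw [hPdef a (by omega), hPdef b' (by omega), hPdef c hc]
    exact hcross _ _ _ (Fin.mk_lt_mk.2 h1) (Fin.mk_lt_mk.2 h2)
  have hxmaxP : ∀ a b' c : ℕ, a < b' → b' < c → c ≤ m →
      (P b').1 < max (P a).1 (P c).1 := by
    intro a b' c h1 h2 hc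
    rw [hPdef a (by omega), hPdef b' (by omega), hPdef c hc]
    exact hxmax _ _ _ (Fin.mk_lt_mk.2 h1) (Fin.mk_lt_mk.2 h2)
  have hPmem : ∀ (a : ℕ), a ≤ m → P a ∈ S := by
    intro a h; rw [hPdef a h]; exact hpmem _
  have hPeq : ∀ a b' : ℕ, a ≤ m → b' ≤ m → P a = P b' → a = b' := by
    intro a b' ha hb' h
    rw [hPdef a ha, hPdef b' hb'] at h
    simpa using congrArg Fin.val (hpinj h)
  have hPne : ∀ a b' : ℕ, a ≤ m → b' ≤ m → a ≠ b' → P a ≠ P b' := by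
    intro a b' ha hb' hne hc
    exact hne (hPeq a b' ha hb' hc)
  have hsgle : ∀ i : Fin (m + 1), sg xs dd m i.1 ≤ m :=
    fun i => sg_le xs dd m i.1 (by omega)
  set E : Fin (m + 1) → ℝ × ℝ := fun i => P (sg xs dd m i.1) with hEdef
  have hEc : ∀ i : Fin m, E i.castSucc = P (sg xs dd m (i : ℕ)) := by
    intro i; simp only [hEdef, Fin.coe_castSucc]
  have hEs : ∀ i : Fin m, E i.succ = P (sg xs dd m ((i : ℕ) + 1)) := by
    intro i; simp only [hEdef, Fin.val_succ]
  have hElast : E (Fin.last m) = P (sg xs dd m m) := by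
    simp only [hEdef, Fin.val_last]
  have hdd_k : ∀ (i : Fin m), dd ((i : ℕ) + 1 - 1) = d i := by
    intro i
    rw [Nat.add_sub_cancel, hdd_eq i.1 i.isLt]
  refine ⟨E, ⟨⟨?_, ?_⟩, ?_, ?_, ?_⟩, ?_, ?_, ?_⟩
  · -- injective
    intro i j hij
    simp only [hEdef] at hij
    have h1 := hPeq _ _ (hsgle i) (hsgle j) hij
    by_contra hne
    have hne' : (i : ℕ) ≠ (j : ℕ) := fun hc => hne (Fin.ext hc)
    rcases lt_or_gt_of_ne hne' with h | h
    · exact sg_inj xs dd m j.1 i.1 h (by omega) h1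
    · exact sg_inj xs dd m i.1 j.1 h (by omega) h1.symm
  · -- range
    have hFinj : Function.Injective
        (fun i : Fin (m + 1) => (⟨sg xs dd m i.1, by have := hsgle i; omega⟩ : Fin (m + 1))) := by
      intro i j hij
      simp only [Fin.mk.injEq] at hij
      by_contra hne
      have hne' : (i : ℕ) ≠ (j : ℕ) := fun hc => hne (Fin.ext hc)
      rcases lt_or_gt_of_ne hne' with h | h
      · exact sg_inj xs dd m j.1 i.1 h (by omega) hij
      · exact sg_inj xs dd m i.1 j.1 h (by omega) hij.symm
    have hFsurj := Finite.injective_iff_surjective.1 hFinj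
    ext x
    constructor
    · rintro ⟨i, rfl⟩
      simp only [hEdef]
      exact hPmem _ (hsgle i)
    · intro hx
      obtain ⟨i0, hi0⟩ := hpsur x hx
      obtain ⟨i, hFi⟩ := hFsurj i0
      refine ⟨i, ?_⟩
      simp only [hEdef]
      rw [hPdef _ (hsgle i)]
      rw [show (⟨sg xs dd m i.1, by have := hsgle i; omega⟩ : Fin (m + 1)) = i0 from hFi]
      exact hi0
  · -- DirConsistent
    intro i
    have hk1 : 1 ≤ (i : ℕ) + 1 := by omega
    have hk2 : (i : ℕ) + 1 ≤ m := by omega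
    have hsp := ivl_spec xs dd m (m - ((i : ℕ) + 1)) (by omega)
    have hmk : m - (m - ((i : ℕ) + 1)) = (i : ℕ) + 1 := by omega
    rw [hmk] at hsp
    have hcs := sg_eq xs dd m ((i : ℕ) + 1) hk1
    have his := ivl_succ_eq xs dd m ((i : ℕ) + 1) hk1 hk2
    have hprev := sg_mem xs dd m (i : ℕ) (by omega)
    have hmki : m - (i : ℕ) = m - ((i : ℕ) + 1) + 1 := by omega
    rw [hmki] at hprev
    rw [his] at hprev
    rw [hdd_k i] at hcs hprev
    have hhile := ivl_hi_le xs dd m (m - ((i : ℕ) + 1))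
    rw [hEc i, hEs i]
    cases hdi : d i with
    | L => exact absurd hdi (hd i)
    | U =>
      rw [hdi] at hcs hprev
      simp only [stepB, if_true] at hcs hprev
      show (P (sg xs dd m (i : ℕ))).2 < (P (sg xs dd m ((i : ℕ) + 1))).2
      rw [hcs]
      exact hyP _ _ (by omega) (by omega)
    | D =>
      rw [hdi] at hcs hprev
      simp only [stepB] at hcs hprev
      simp only [Bool.false_eq_true, ↓reduceIte] at hcs hprev
      show (P (sg xs dd m ((i : ℕ) + 1))).2 < (P (sg xs dd m (i : ℕ))).2
      rw [hcs]
      exact hyP _ _ (by omega) (by omega)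
    | R =>
      rw [hdi] at hcs hprev
      simp only [stepB] at hcs hprev
      show (P (sg xs dd m (i : ℕ))).1 < (P (sg xs dd m ((i : ℕ) + 1))).1
      have hxlo := hxsP (ivl xs dd m (m - ((i : ℕ) + 1))).1 (by omega)
      have hxhi := hxsP (ivl xs dd m (m - ((i : ℕ) + 1))).2 (by omega)
      by_cases hx : xs (ivl xs dd m (m - ((i : ℕ) + 1))).1 < xs (ivl xs dd m (m - ((i : ℕ) + 1))).2
      · simp only [decide_eq_true_eq, hx, ↓reduceIte] at hcs hprev
        rw [hcs]
        rw [hxlo, hxhi] at hx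
        rcases Nat.lt_or_ge (ivl xs dd m (m - ((i : ℕ) + 1))).1 (sg xs dd m (i : ℕ)) with h | h
        · have hmx := hxmaxP (ivl xs dd m (m - ((i : ℕ) + 1))).1 (sg xs dd m (i : ℕ))
            (ivl xs dd m (m - ((i : ℕ) + 1))).2 h (by omega) (by omega)
          calc (P (sg xs dd m (i : ℕ))).1
              < max (P (ivl xs dd m (m - ((i : ℕ) + 1))).1).1
                  (P (ivl xs dd m (m - ((i : ℕ) + 1))).2).1 := hmx
            _ = (P (ivl xs dd m (m - ((i : ℕ) + 1))).2).1 := max_eq_right hx.le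
        · have heq : sg xs dd m (i : ℕ) = (ivl xs dd m (m - ((i : ℕ) + 1))).1 := by omega
          rw [heq]; exact hx
      · simp only [decide_eq_true_eq, hx, ↓reduceIte] at hcs hprev
        rw [hcs]
        rw [hxlo, hxhi] at hx
        have hlonehi : (P (ivl xs dd m (m - ((i : ℕ) + 1))).2).1
            ≠ (P (ivl xs dd m (m - ((i : ℕ) + 1))).1).1 := by
          have hne : P (ivl xs dd m (m - ((i : ℕ) + 1))).2 ≠ P (ivl xs dd m (m - ((i : ℕ) + 1))).1 :=
            hPne _ _ (by omega) (by omega) (by omega)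
          intro hc
          exact (hgen.2 _ (hPmem _ (by omega)) _ (hPmem _ (by omega)) hne).1 hc
        have hx' : (P (ivl xs dd m (m - ((i : ℕ) + 1))).2).1
            < (P (ivl xs dd m (m - ((i : ℕ) + 1))).1).1 := lt_of_le_of_ne (not_lt.1 hx) hlonehi
        rcases Nat.lt_or_ge (sg xs dd m (i : ℕ)) (ivl xs dd m (m - ((i : ℕ) + 1))).2 with h | h
        · have hmx := hxmaxP (ivl xs dd m (m - ((i : ℕ) + 1))).1 (sg xs dd m (i : ℕ))
            (ivl xs dd m (m - ((i : ℕ) + 1))).2 (by omega) h (by omega)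
          calc (P (sg xs dd m (i : ℕ))).1
              < max (P (ivl xs dd m (m - ((i : ℕ) + 1))).1).1
                  (P (ivl xs dd m (m - ((i : ℕ) + 1))).2).1 := hmx
            _ = (P (ivl xs dd m (m - ((i : ℕ) + 1))).1).1 := max_eq_left hx'.le
        · have heq : sg xs dd m (i : ℕ) = (ivl xs dd m (m - ((i : ℕ) + 1))).2 := by omega
          rw [heq]; exact hx'
  · -- nonadjacent planarity
    intro i j hij
    rw [hEc i, hEs i, hEc j, hEs j]
    have hjm : (j : ℕ) + 1 ≤ m := by omega
    have hA1 := sg_mem xs dd m (i : ℕ) (by omega)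
    have hA2 := sg_mem xs dd m ((i : ℕ) + 1) (by omega)
    have hMon1 := ivl_mono xs dd m (m - (j : ℕ) + 1) (m - (i : ℕ)) (by omega)
    have hMon2 := ivl_mono xs dd m (m - (j : ℕ) + 1) (m - ((i : ℕ) + 1)) (by omega)
    have hMon3 := ivl_mono xs dd m (m - (j : ℕ)) (m - (j : ℕ) + 1) (by omega)
    have hB1mem := sg_mem xs dd m (j : ℕ) (by omega)
    have hB1not := sg_notmem xs dd m (j : ℕ) (by omega) (by omega)
    have hB2eq := sg_eq xs dd m ((j : ℕ) + 1) (by omega)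
    have hIs := ivl_succ_eq xs dd m ((j : ℕ) + 1) (by omega) (by omega)
    have hmm2 : m - ((j : ℕ) + 1) + 1 = m - (j : ℕ) := by omega
    rw [hmm2] at hIs
    have hQspec := ivl_spec xs dd m (m - ((j : ℕ) + 1)) (by omega)
    have hQmk : m - (m - ((j : ℕ) + 1)) = (j : ℕ) + 1 := by omega
    rw [hQmk] at hQspec
    have hhiQ := ivl_hi_le xs dd m (m - ((j : ℕ) + 1))
    have ha1m : sg xs dd m (i : ℕ) ≤ m := sg_le xs dd m _ (by omega)
    have ha2m : sg xs dd m ((i : ℕ) + 1) ≤ m := sg_le xs dd m _ (by omega)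
    have hb1m : sg xs dd m (j : ℕ) ≤ m := sg_le xs dd m _ (by omega)
    have hb2m : sg xs dd m ((j : ℕ) + 1) ≤ m := sg_le xs dd m _ (by omega)
    cases hb4 : stepB xs (dd ((j : ℕ) + 1 - 1)) (ivl xs dd m (m - ((j : ℕ) + 1))).1
        (ivl xs dd m (m - ((j : ℕ) + 1))).2 with
    | false =>
      rw [hb4] at hB2eq hIs
      rw [if_neg (by simp)] at hB2eq hIs
      rw [hIs] at hB1mem hMon3
      simp only at hB1mem hMon3
      rcases hB1not with h | h
      · have h1 : (P (sg xs dd m (j : ℕ))).2 < (P (sg xs dd m (i : ℕ))).2 :=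
          hyP _ _ (by omega) (by omega)
        have h2 : (P (sg xs dd m (j : ℕ))).2 < (P (sg xs dd m ((i : ℕ) + 1))).2 :=
          hyP _ _ (by omega) (by omega)
        have h3 : (P (sg xs dd m ((j : ℕ) + 1))).2 < (P (sg xs dd m (j : ℕ))).2 := by
          rw [hB2eq]
          exact hyP _ _ (by omega) (by omega)
        have hmin := lt_min h1 h2
        rw [Set.inter_comm]
        exact segDisjY (((P (sg xs dd m (j : ℕ))).2
            + min (P (sg xs dd m (i : ℕ))).2 (P (sg xs dd m ((i : ℕ) + 1))).2) / 2) _ _ _ _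
          (by linarith) (by linarith)
          (by have := min_le_left (P (sg xs dd m (i : ℕ))).2 (P (sg xs dd m ((i : ℕ) + 1))).2
              linarith)
          (by have := min_le_right (P (sg xs dd m (i : ℕ))).2 (P (sg xs dd m ((i : ℕ) + 1))).2
              linarith)
      · have hc1 : 0 < cross (P (sg xs dd m ((j : ℕ) + 1))) (P (sg xs dd m (j : ℕ)))
            (P (sg xs dd m (i : ℕ))) := by
          rw [hB2eq]
          exact hcrossP _ _ _ (by omega) (by omega) (by omega)
        have hc2 : 0 < cross (P (sg xs dd m ((j : ℕ) + 1))) (P (sg xs dd m (j : ℕ)))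
            (P (sg xs dd m ((i : ℕ) + 1))) := by
          rw [hB2eq]
          exact hcrossP _ _ _ (by omega) (by omega) (by omega)
        rw [show segment ℝ (P (sg xs dd m (j : ℕ))) (P (sg xs dd m ((j : ℕ) + 1)))
            = segment ℝ (P (sg xs dd m ((j : ℕ) + 1))) (P (sg xs dd m (j : ℕ)))
          from segment_symm ℝ _ _]
        exact segDisjCross _ _ _ _ hc1 hc2
    | true =>
      rw [hb4] at hB2eq hIs
      rw [if_pos rfl] at hB2eq hIs
      rw [hIs] at hB1mem hMon3
      simp only at hB1mem hMon3
      rcases hB1not with h | h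
      · have hc1 : 0 < cross (P (sg xs dd m (j : ℕ))) (P (sg xs dd m ((j : ℕ) + 1)))
            (P (sg xs dd m (i : ℕ))) := by
          rw [hB2eq]
          exact hcrossP _ _ _ (by omega) (by omega) (by omega)
        have hc2 : 0 < cross (P (sg xs dd m (j : ℕ))) (P (sg xs dd m ((j : ℕ) + 1)))
            (P (sg xs dd m ((i : ℕ) + 1))) := by
          rw [hB2eq]
          exact hcrossP _ _ _ (by omega) (by omega) (by omega)
        exact segDisjCross _ _ _ _ hc1 hc2
      · have h1 : (P (sg xs dd m (i : ℕ))).2 < (P (sg xs dd m (j : ℕ))).2 :=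
          hyP _ _ (by omega) (by omega)
        have h2 : (P (sg xs dd m ((i : ℕ) + 1))).2 < (P (sg xs dd m (j : ℕ))).2 :=
          hyP _ _ (by omega) (by omega)
        have h3 : (P (sg xs dd m (j : ℕ))).2 < (P (sg xs dd m ((j : ℕ) + 1))).2 := by
          rw [hB2eq]
          exact hyP _ _ (by omega) (by omega)
        have hmax := max_lt h1 h2
        exact segDisjY ((max (P (sg xs dd m (i : ℕ))).2 (P (sg xs dd m ((i : ℕ) + 1))).2
            + (P (sg xs dd m (j : ℕ))).2) / 2) _ _ _ _
          (by have := le_max_left (P (sg xs dd m (i : ℕ))).2 (P (sg xs dd m ((i : ℕ) + 1))).2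
              linarith)
          (by have := le_max_right (P (sg xs dd m (i : ℕ))).2 (P (sg xs dd m ((i : ℕ) + 1))).2
              linarith)
          (by linarith) (by linarith)
  · -- adjacent planarity
    intro i j hij
    have hjcast : E j.castSucc = E i.succ := by
      rw [hEc j, hEs i, hij]
    rw [hEc i, hjcast, hEs i, hEs j]
    have hj1 : (j : ℕ) + 1 ≤ m := by omega
    have hne12 : sg xs dd m (i : ℕ) ≠ sg xs dd m ((i : ℕ) + 1) :=
      sg_inj xs dd m ((i : ℕ) + 1) (i : ℕ) (by omega) (by omega)
    have hne13 : sg xs dd m (i : ℕ) ≠ sg xs dd m ((j : ℕ) + 1) :=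
      sg_inj xs dd m ((j : ℕ) + 1) (i : ℕ) (by omega) (by omega)
    have hne23 : sg xs dd m ((i : ℕ) + 1) ≠ sg xs dd m ((j : ℕ) + 1) :=
      sg_inj xs dd m ((j : ℕ) + 1) ((i : ℕ) + 1) (by omega) (by omega)
    have ha1m : sg xs dd m (i : ℕ) ≤ m := sg_le xs dd m _ (by omega)
    have ha2m : sg xs dd m ((i : ℕ) + 1) ≤ m := sg_le xs dd m _ (by omega)
    have ha3m : sg xs dd m ((j : ℕ) + 1) ≤ m := sg_le xs dd m _ (by omega)
    exact segAdj _ _ _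
      (hgen.1 _ (hPmem _ ha1m) _ (hPmem _ ha2m) _ (hPmem _ ha3m)
        (hPne _ _ ha1m ha2m hne12) (hPne _ _ ha1m ha3m hne13)
        (hPne _ _ ha2m ha3m hne23))
  · -- last U
    intro hU
    rw [hElast, sg_eq xs dd m m (by omega)]
    have h1 : dd (m - 1) = Dir.U := by rw [hdd_eq (m - 1) (by omega)]; exact hU
    rw [h1]
    simp only [stepB, if_true]
    rw [Nat.sub_self, ivl_zero]
    rw [hPdef m le_rfl]
    exact ht
  · -- last D
    intro hD
    rw [hElast, sg_eq xs dd m m (by omega)]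
    have h1 : dd (m - 1) = Dir.D := by rw [hdd_eq (m - 1) (by omega)]; exact hD
    rw [h1]
    simp only [stepB]
    simp only [Bool.false_eq_true, ↓reduceIte]
    rw [Nat.sub_self, ivl_zero]
    rw [hPdef 0 (by omega)]
    exact hb
  · -- last R
    intro hR
    rw [hElast, sg_eq xs dd m m (by omega)]
    have h1 : dd (m - 1) = Dir.R := by rw [hdd_eq (m - 1) (by omega)]; exact hR
    rw [h1]
    simp only [stepB]
    rw [Nat.sub_self, ivl_zero]
    have hxs0 : xs 0 = (P 0).1 := hxsP 0 (by omega)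
    have hxsm : xs m = (P m).1 := hxsP m le_rfl
    have hP0b : P 0 = b := by rw [hPdef 0 (by omega)]; exact hb
    have hPmt : P m = t := by rw [hPdef m le_rfl]; exact ht
    have hne0m : (P 0).1 ≠ (P m).1 := by
      have h0m : P 0 ≠ P m := hPne 0 m (by omega) le_rfl (by omega)
      intro hc
      exact (hgen.2 (P 0) (hPmem 0 (by omega)) (P m) (hPmem m le_rfl) h0m).1 hc
    by_cases hx : xs 0 < xs m
    · simp only [decide_eq_true_eq, hx, ↓reduceIte]
      rw [hxs0, hxsm] at hx
      constructor
      · refine ⟨hPmem m le_rfl, ?_⟩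
        intro q hq hqne
        obtain ⟨i0, hi0⟩ := hpsur q hq
        have hi0m : (i0 : ℕ) ≤ m := by omega
        have hq' : q = P i0.1 := by rw [hPdef i0.1 hi0m, ← hi0]
        rcases Nat.lt_or_ge (i0 : ℕ) m with hlt | hge
        · rcases Nat.eq_zero_or_pos (i0 : ℕ) with h0 | h0
          · rw [hq', h0]; exact hx
          · have hmx := hxmaxP 0 i0.1 m h0 hlt le_rfl
            rw [hq']
            calc (P i0.1).1 < max (P 0).1 (P m).1 := hmx
              _ = (P m).1 := max_eq_right hx.le
        · exfalso
          have h0 : (i0 : ℕ) = m := by omega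
          exact hqne (by rw [hq', h0])
      · left; exact hPmt
    · simp only [decide_eq_true_eq, hx, ↓reduceIte]
      rw [hxs0, hxsm] at hx
      have hx' : (P m).1 < (P 0).1 := lt_of_le_of_ne (not_lt.1 hx) (Ne.symm hne0m)
      constructor
      · refine ⟨hPmem 0 (by omega), ?_⟩
        intro q hq hqne
        obtain ⟨i0, hi0⟩ := hpsur q hq
        have hi0m : (i0 : ℕ) ≤ m := by omega
        have hq' : q = P i0.1 := by rw [hPdef i0.1 hi0m, ← hi0]
        rcases Nat.eq_zero_or_pos (i0 : ℕ) with h0 | h0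
        · exact absurd (by rw [hq', h0]) hqne
        · rcases Nat.lt_or_ge (i0 : ℕ) m with hlt | hge
          · have hmx := hxmaxP 0 i0.1 m h0 hlt le_rfl
            rw [hq']
            calc (P i0.1).1 < max (P 0).1 (P m).1 := hmx
              _ = (P 0).1 := max_eq_left hx'.le
          · have h0' : (i0 : ℕ) = m := by omega
            rw [hq', h0']; exact hx'
      · right; exact hP0b
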